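/- Let d ≥ 1 be an integer and c a real number. If there exists a polynomial q with real coefficients such that for every integer n ≥ 0, ∑_{k=0}^{n−1} (k^d − c)/k! = −q(n)/n!, then c = b(d). -/

import Mathlib

open Finset

/-- The Bell numbers: `bell 0 = 1` and `bell (d+1) = ∑_{j=0}^{d} C(d,j) * bell j`. -/
def bell : ℕ → ℕ
  | 0 => 1
  | d + 1 => ∑ j ∈ (Finset.range (d + 1)).attach, Nat.choose d j.1 * bell j.1
  decreasing_by exact Finset.mem_range.mp j.2

lemma bell_succ (d : ℕ) :
    bell (d + 1) = ∑ j ∈ Finset.range (d + 1), Nat.choose d j * bell j := by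
  rw [bell]
  exact Finset.sum_attach (Finset.range (d + 1)) (fun j => Nat.choose d j * bell j)

lemma summable_aux (d : ℕ) :
    Summable (fun k : ℕ => (k : ℝ) ^ d / (Nat.factorial k : ℝ)) := by
  refine Summable.of_nonneg_of_le (fun k => by positivity) (fun k => ?_)
    ((Real.summable_pow_div_factorial (Real.exp 1)).mul_left (Nat.factorial d : ℝ))
  · rw [mul_div_assoc']
    apply div_le_div_of_nonneg_right _ (by positivity)
    have h1 := Real.pow_div_factorial_le_exp (x := (k : ℝ)) (by positivity) d
    rw [div_le_iff₀ (by positivity)] at h1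
    calc (k : ℝ) ^ d ≤ Real.exp k * (Nat.factorial d : ℝ) := h1
      _ = (Nat.factorial d : ℝ) * Real.exp 1 ^ k := by
          rw [← Real.exp_nat_mul, mul_one, mul_comm]

noncomputable def T (d : ℕ) : ℝ := ∑' k : ℕ, (k : ℝ) ^ d / (Nat.factorial k : ℝ)

lemma T_zero_pos : 0 < T 0 := by
  have := Summable.tsum_pos (summable_aux 0) (fun k => by positivity) 0 (by norm_num)
  simpa [T] using this

lemma T_succ (d : ℕ) : T (d + 1) = ∑ j ∈ Finset.range (d + 1), (Nat.choose d j : ℝ) * T j := by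
  have h1 : T (d + 1) = ∑' k : ℕ, ((k : ℝ) + 1) ^ d / (Nat.factorial k : ℝ) := by
    rw [T, Summable.tsum_eq_zero_add (summable_aux (d + 1))]
    simp only [Nat.cast_zero, zero_pow (Nat.succ_ne_zero d), Nat.factorial_zero, Nat.cast_one,
      zero_div, zero_add]
    congr 1
    funext k
    rw [Nat.factorial_succ, pow_succ]
    push_cast
    field_simp
  rw [h1]
  have h2 : ∀ k : ℕ, ((k : ℝ) + 1) ^ d / (Nat.factorial k : ℝ) =
      ∑ j ∈ Finset.range (d + 1), (Nat.choose d j : ℝ) * ((k : ℝ) ^ j / (Nat.factorial k : ℝ)) := by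
    intro k
    rw [add_pow]
    rw [Finset.sum_div]
    apply Finset.sum_congr rfl
    intro j _
    ring
  simp_rw [h2]
  rw [Summable.tsum_finsetSum (fun j _ => (summable_aux j).mul_left _)]
  apply Finset.sum_congr rfl
  intro j _
  rw [(summable_aux j).tsum_mul_left]
  rfl

lemma T_eq_bell (d : ℕ) : T d = (bell d : ℝ) * T 0 := by
  induction d using Nat.strong_induction_on with
  | _ d ih =>
    match d with
    | 0 => simp [bell]
    | d + 1 =>
      rw [T_succ, bell_succ]
      push_cast
      rw [Finset.sum_mul]
      apply Finset.sum_congr rfl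
      intro j hj
      rw [ih j (Finset.mem_range.mp hj)]
      ring

theorem stmt_1 (d : ℕ) (hd : 1 ≤ d) (c : ℝ)
    (h : ∃ q : Polynomial ℝ, ∀ n : ℕ,
      ∑ k ∈ Finset.range n, (((k : ℝ) ^ d - c) / (Nat.factorial k : ℝ)) =
        -(q.eval (n : ℝ) / (Nat.factorial n : ℝ))) :
    c = bell d := by
  obtain ⟨q, hq⟩ := h
  -- the series has sum T d - c * T 0
  have hsum : HasSum (fun k : ℕ => ((k : ℝ) ^ d - c) / (Nat.factorial k : ℝ))
      (T d - c * T 0) := by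
    have h1 := (summable_aux d).hasSum
    have h2 := ((summable_aux 0).hasSum).mul_left c
    have := h1.sub h2
    convert this using 1
    · rfl
    funext k
    simp [sub_div, div_eq_mul_inv, sub_mul, mul_assoc]
    rfl
  -- partial sums tend to T d - c * T 0
  have htend1 := hsum.tendsto_sum_nat
  -- partial sums also tend to 0
  have htend2 : Filter.Tendsto
      (fun n : ℕ => ∑ k ∈ Finset.range n, (((k : ℝ) ^ d - c) / (Nat.factorial k : ℝ)))
      Filter.atTop (nhds 0) := by
    simp_rw [hq]
    rw [show (0 : ℝ) = -0 by ring]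
    apply Filter.Tendsto.neg
    have heval : ∀ n : ℕ, q.eval (n : ℝ) / (Nat.factorial n : ℝ) =
        ∑ i ∈ Finset.range (q.natDegree + 1),
          q.coeff i * ((n : ℝ) ^ i / (Nat.factorial n : ℝ)) := by
      intro n
      rw [Polynomial.eval_eq_sum_range, Finset.sum_div]
      apply Finset.sum_congr rfl
      intro i _
      ring
    simp_rw [heval]
    rw [show (0 : ℝ) = ∑ i ∈ Finset.range (q.natDegree + 1), q.coeff i * 0 by simp]
    apply tendsto_finset_sum
    intro i _
    exact ((summable_aux i).tendsto_atTop_zero).const_mul _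
  have h0 : T d - c * T 0 = 0 := tendsto_nhds_unique htend1 htend2
  have := T_eq_bell d
  have hT0 := T_zero_pos
  have : c * T 0 = (bell d : ℝ) * T 0 := by linarith
  exact mul_right_cancel₀ (ne_of_gt hT0) this
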